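/- In the construction for the (⇒) direction of Lemma 3.1, for every subformula θ of φ and every point x̄ ∈ W̄′ ∩ R̄^{≤md φ − md θ}(ū): 𝔉′, x̄ ⊨^{v′} θ if and only if 𝔉, x̄ ⊨ᵛ σ(θ). -/

import Mathlib

namespace ModalProducts

/-- `N`-modal formulas over propositional variables indexed by `ℕ`
(the variable `pₖ` is `var k`; the extra variable `p` is `var 0`). -/
inductive MF (N : ℕ) : Type
  | var : ℕ → MF N
  | bot : MF N
  | and : MF N → MF N → MF N
  | or  : MF N → MF N → MF N
  | imp : MF N → MF N → MF N
  | box : Fin N → MF N → MF N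
deriving DecidableEq

namespace MF

variable {N : ℕ}

/-- negation: `¬ψ = ψ → ⊥`. -/
def neg (φ : MF N) : MF N := imp φ bot

/-- diamond: `◇ᵢψ = ¬□ᵢ¬ψ`. -/
def dia (i : Fin N) (φ : MF N) : MF N := neg (box i (neg φ))

/-- modal depth. -/
def md : MF N → ℕ
  | var _ => 0
  | bot => 0
  | and φ ψ => max (md φ) (md ψ)
  | or φ ψ => max (md φ) (md ψ)
  | imp φ ψ => max (md φ) (md ψ)
  | box _ φ => md φ + 1

/-- length (number of symbols; the variable `pₖ` counts as `k+1` symbols,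
accounting for the subscript). -/
def len : MF N → ℕ
  | var q => q + 1
  | bot => 1
  | and φ ψ => len φ + len ψ + 1
  | or φ ψ => len φ + len ψ + 1
  | imp φ ψ => len φ + len ψ + 1
  | box _ φ => len φ + 1

/-- the set of propositional variables occurring in a formula. -/
def vars : MF N → Set ℕ
  | var q => {q}
  | bot => ∅
  | and φ ψ => vars φ ∪ vars ψ
  | or φ ψ => vars φ ∪ vars ψ
  | imp φ ψ => vars φ ∪ vars ψ
  | box _ φ => vars φ

/-- the largest index of a variable occurring in a formula (0 if none). -/
def maxVar : MF N → ℕ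
  | var q => q
  | bot => 0
  | and φ ψ => max (maxVar φ) (maxVar ψ)
  | or φ ψ => max (maxVar φ) (maxVar ψ)
  | imp φ ψ => max (maxVar φ) (maxVar ψ)
  | box _ φ => maxVar φ

/-- the list of subformulas of a formula. -/
def subfs : MF N → List (MF N)
  | var q => [var q]
  | bot => [bot]
  | and φ ψ => and φ ψ :: (subfs φ ++ subfs ψ)
  | or φ ψ => or φ ψ :: (subfs φ ++ subfs ψ)
  | imp φ ψ => imp φ ψ :: (subfs φ ++ subfs ψ)
  | box i φ => box i φ :: subfs φ

/-- uniform substitution of formulas for variables. -/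
def subst (s : ℕ → MF N) : MF N → MF N
  | var q => s q
  | bot => bot
  | and φ ψ => and (subst s φ) (subst s ψ)
  | or φ ψ => or (subst s φ) (subst s ψ)
  | imp φ ψ => imp (subst s φ) (subst s ψ)
  | box i φ => box i (subst s φ)

end MF

/-- `θ` is a subformula of `φ`. -/
def Subformula {N : ℕ} (θ φ : MF N) : Prop := θ ∈ φ.subfs

/-- A Kripke `N`-frame: a nonempty set of points with `N` accessibility relations. -/
structure Frame (N : ℕ) where
  W : Type
  nonempty : Nonempty W
  R : Fin N → W → W → Prop

/-- Truth of a formula at a point of a frame under a valuation. -/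
def Sat {N : ℕ} (F : Frame N) (v : ℕ → Set F.W) : F.W → MF N → Prop
  | x, .var q => x ∈ v q
  | _, .bot => False
  | x, .and φ ψ => Sat F v x φ ∧ Sat F v x ψ
  | x, .or φ ψ => Sat F v x φ ∨ Sat F v x ψ
  | x, .imp φ ψ => Sat F v x φ → Sat F v x ψ
  | x, .box i φ => ∀ y, F.R i x y → Sat F v y φ

/-- Validity of a formula in a frame: truth at every point under every valuation. -/
def Valid {N : ℕ} (F : Frame N) (φ : MF N) : Prop := ∀ (v : ℕ → Set F.W) (x : F.W), Sat F v x φ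

/-- A set of formulas is valid in a frame if all of its members are. -/
def ValidSet {N : ℕ} (F : Frame N) (L : Set (MF N)) : Prop := ∀ φ ∈ L, Valid F φ

/-- The logic of a class of frames. -/
def Logic {N : ℕ} (C : Set (Frame N)) : Set (MF N) := {φ | ∀ F ∈ C, Valid F φ}

/-- A logic is Kripke complete if it is the logic of some nonempty class of frames. -/
def KripkeComplete {N : ℕ} (L : Set (MF N)) : Prop :=
  ∃ C : Set (Frame N), C.Nonempty ∧ L = Logic C

/-- The product of `N` 1-frames. -/
def prodFrame {N : ℕ} (Fs : Fin N → Frame 1) : Frame N where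
  W := ∀ i, (Fs i).W
  nonempty := ⟨fun i => (Fs i).nonempty.some⟩
  R := fun i x y => (Fs i).R 0 (x i) (y i) ∧ ∀ k, k ≠ i → x k = y k

/-- The product of `N` Kripke complete monomodal logics: the logic of the class of
products of frames of the factors. -/
def productLogic {N : ℕ} (Ls : Fin N → Set (MF 1)) : Set (MF N) :=
  Logic {F | ∃ Fs : Fin N → Frame 1, (∀ i, ValidSet (Fs i) (Ls i)) ∧ F = prodFrame Fs}

/-- A 1-frame is reflexive. -/
def ReflexiveFrame (F : Frame 1) : Prop := ∀ x, F.R 0 x x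

/-- The logic `T` of all reflexive 1-frames. -/
def logicT : Set (MF 1) := Logic {F | ReflexiveFrame F}

/-- The logic `K` of all 1-frames. -/
def logicK : Set (MF 1) := Logic Set.univ

/-- The logic `S5` of all 1-frames whose relation is an equivalence. -/
def logicS5 : Set (MF 1) := Logic {F | Equivalence (F.R 0)}

section Translation

variable {n : ℕ}

/-- the variable `p`. -/
def pv : MF (n+1) := .var 0

/-- `◆₁ψ = ◇₁(¬p ∧ ◇₁(p ∧ ψ))`. -/
def blackDia (ψ : MF (n+1)) : MF (n+1) :=
  MF.dia 0 (.and (MF.neg pv) (MF.dia 0 (.and pv ψ)))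

/-- `α_k = ◆₁ᵏ □₁ p`. -/
def alphaF (k : ℕ) : MF (n+1) := blackDia^[k] (.box 0 pv)

/-- `β_k = ¬p ∧ ◇₁(p ∧ α_k)`. -/
def betaF (k : ℕ) : MF (n+1) := .and (MF.neg pv) (MF.dia 0 (.and pv (alphaF k)))

/-- `B = β_{m+1}`. -/
def Bf (m : ℕ) : MF (n+1) := betaF (m+1)

/-- The translation `σ`: `σ(p_k) = β_k`, `σ(⊥) = ⊥`, `σ` commutes with `∧, ∨, →`,
and `σ(□ᵢψ) = □ᵢ(B → σ(ψ))`. -/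
def sigmaT (m : ℕ) : MF (n+1) → MF (n+1)
  | .var k => betaF k
  | .bot => .bot
  | .and φ ψ => .and (sigmaT m φ) (sigmaT m ψ)
  | .or φ ψ => .or (sigmaT m φ) (sigmaT m ψ)
  | .imp φ ψ => .imp (sigmaT m φ) (sigmaT m ψ)
  | .box i φ => .box i (.imp (Bf m) (sigmaT m φ))

/-- conjunction of a head formula with a list of formulas. -/
def bigAnd (ψ : MF (n+1)) (l : List (MF (n+1))) : MF (n+1) := l.foldl .and ψ

/-- `□^{≤k}`: `□^{≤0}ψ = ψ`, `□^{≤k+1}ψ = □^{≤k}ψ ∧ □₁□^{≤k}ψ ∧ … ∧ □ₙ□^{≤k}ψ`. -/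
def boxLe : ℕ → MF (n+1) → MF (n+1)
  | 0, ψ => ψ
  | k+1, ψ => bigAnd (boxLe k ψ) (List.ofFn fun i : Fin (n+1) => .box i (boxLe k ψ))

/-- `□₋₁^{≤k}`: like `□^{≤k}` but using only `□₂, …, □ₙ`. -/
def boxLeTail : ℕ → MF (n+1) → MF (n+1)
  | 0, ψ => ψ
  | k+1, ψ => bigAnd (boxLeTail k ψ) (List.ofFn fun i : Fin n => .box i.succ (boxLeTail k ψ))

/-- `◇₋₁^{≤k}ψ = ¬□₋₁^{≤k}¬ψ`. -/
def diaLeTail (k : ℕ) (ψ : MF (n+1)) : MF (n+1) := MF.neg (boxLeTail k (MF.neg ψ))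

/-- `A = B ∧ □^{≤md φ}(B → □₋₁^{≤md φ}B) ∧ □^{≤md φ}(◇₋₁^{≤md φ}B → B)`. -/
def Af (m : ℕ) (φ : MF (n+1)) : MF (n+1) :=
  .and (Bf m)
    (.and (boxLe φ.md (.imp (Bf m) (boxLeTail φ.md (Bf m))))
          (boxLe φ.md (.imp (diaLeTail φ.md (Bf m)) (Bf m))))

end Translation

end ModalProducts
namespace ModalProducts

section Restriction

variable {n : ℕ}

/-- `R̄^{≤k}`: `R̄^{≤0}` is the identity, and
`R̄^{≤k+1} = R̄^{≤k} ∪ R̄₁ ∘ R̄^{≤k} ∪ … ∪ R̄ₙ ∘ R̄^{≤k}`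
(reachability in at most `k` steps along the relations of the frame). -/
def RleAll {N : ℕ} (F : Frame N) : ℕ → F.W → F.W → Prop
  | 0 => fun x y => x = y
  | k+1 => fun x y => RleAll F k x y ∨ ∃ (i : Fin N) (z : F.W), F.R i x z ∧ RleAll F k z y

/-- `R̄₋₁^{≤k}`: reachability in at most `k` steps along `R̄₂, …, R̄ₙ` only. -/
def RleTail (F : Frame (n+1)) : ℕ → F.W → F.W → Prop
  | 0 => fun x y => x = y
  | k+1 => fun x y =>
      RleTail F k x y ∨ ∃ (i : Fin n) (z : F.W), F.R i.succ x z ∧ RleTail F k z y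

/-- The set `W′₁ = {x₁ ∈ W₁ : 𝔉, x̄ ⊨ᵛ B and x̄ ∈ R̄^{≤d}(ū)` for some `x̄ ∈ W̄` with first
coordinate `x₁}`. -/
def restrSet (Fs : Fin (n+1) → Frame 1) (m d : ℕ) (v : ℕ → Set (prodFrame Fs).W)
    (u : (prodFrame Fs).W) : Set (Fs 0).W :=
  {x1 | ∃ x : (prodFrame Fs).W, x 0 = x1 ∧ Sat (prodFrame Fs) v x (Bf m) ∧
        RleAll (prodFrame Fs) d u x}

/-- The subframe of a 1-frame induced by a nonempty set of points
(the relation is restricted to the set). -/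
def subFrame1 (F1 : Frame 1) (S : Set F1.W) (hS : S.Nonempty) : Frame 1 where
  W := S
  nonempty := ⟨⟨hS.choose, hS.choose_spec⟩⟩
  R := fun i x y => F1.R i x.val y.val

/-- The factors of the restricted product `𝔉′ = 𝔉′₁ × 𝔉₂ × … × 𝔉ₙ`,
where `𝔉′₁ = ⟨W′₁, R₁ ↾ W′₁⟩`. -/
def restrFactors (Fs : Fin (n+1) → Frame 1) (m d : ℕ) (v : ℕ → Set (prodFrame Fs).W)
    (u : (prodFrame Fs).W) (hS : (restrSet Fs m d v u).Nonempty) : Fin (n+1) → Frame 1 :=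
  Fin.cases (subFrame1 (Fs 0) (restrSet Fs m d v u) hS) (fun i => Fs i.succ)

/-- The restricted product frame `𝔉′ = 𝔉′₁ × 𝔉₂ × … × 𝔉ₙ`. -/
def restrFrame (Fs : Fin (n+1) → Frame 1) (m d : ℕ) (v : ℕ → Set (prodFrame Fs).W)
    (u : (prodFrame Fs).W) (hS : (restrSet Fs m d v u).Nonempty) : Frame (n+1) :=
  prodFrame (restrFactors Fs m d v u hS)

/-- The natural inclusion `W̄′ ⊆ W̄` of the points of `𝔉′` among those of `𝔉`. -/
def restrEmb (Fs : Fin (n+1) → Frame 1) (m d : ℕ) (v : ℕ → Set (prodFrame Fs).W)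
    (u : (prodFrame Fs).W) (hS : (restrSet Fs m d v u).Nonempty)
    (y : (restrFrame Fs m d v u hS).W) : (prodFrame Fs).W :=
  Fin.cases (motive := fun i => (Fs i).W) (y 0).val (fun i => y i.succ)

/-- A point `x̄ ∈ W̄` whose first coordinate lies in `W′₁`, viewed as a point of `W̄′`. -/
def mkRestrPt (Fs : Fin (n+1) → Frame 1) (m d : ℕ) (v : ℕ → Set (prodFrame Fs).W)
    (u : (prodFrame Fs).W) (hS : (restrSet Fs m d v u).Nonempty)
    (x : (prodFrame Fs).W) (hx : x 0 ∈ restrSet Fs m d v u) :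
    (restrFrame Fs m d v u hS).W :=
  Fin.cases (motive := fun i => ((restrFactors Fs m d v u hS) i).W)
    ⟨x 0, hx⟩ (fun i => x i.succ)

end Restriction

end ModalProducts

namespace ModalProducts

section Helpers

variable {N : ℕ} {n : ℕ}

/- ### Basic satisfaction lemmas -/

@[simp] theorem sat_var {F : Frame N} {v : ℕ → Set F.W} {x : F.W} {q : ℕ} :
    Sat F v x (.var q) ↔ x ∈ v q := Iff.rfl

@[simp] theorem sat_bot {F : Frame N} {v : ℕ → Set F.W} {x : F.W} :
    Sat F v x .bot ↔ False := Iff.rfl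

@[simp] theorem sat_and {F : Frame N} {v : ℕ → Set F.W} {x : F.W} {a b : MF N} :
    Sat F v x (.and a b) ↔ Sat F v x a ∧ Sat F v x b := Iff.rfl

@[simp] theorem sat_or {F : Frame N} {v : ℕ → Set F.W} {x : F.W} {a b : MF N} :
    Sat F v x (.or a b) ↔ Sat F v x a ∨ Sat F v x b := Iff.rfl

@[simp] theorem sat_imp {F : Frame N} {v : ℕ → Set F.W} {x : F.W} {a b : MF N} :
    Sat F v x (.imp a b) ↔ (Sat F v x a → Sat F v x b) := Iff.rfl

@[simp] theorem sat_box {F : Frame N} {v : ℕ → Set F.W} {x : F.W} {i : Fin N} {a : MF N} :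
    Sat F v x (.box i a) ↔ ∀ y, F.R i x y → Sat F v y a := Iff.rfl

theorem sat_neg {F : Frame N} {v : ℕ → Set F.W} {x : F.W} {a : MF N} :
    Sat F v x (MF.neg a) ↔ ¬ Sat F v x a := Iff.rfl

/- ### Reachability relations -/

theorem RleAll_mono {F : Frame N} {k k' : ℕ} (hk : k ≤ k') {x y : F.W}
    (h : RleAll F k x y) : RleAll F k' x y := by
  induction hk with
  | refl => exact h
  | step _ ih => exact Or.inl ih

theorem RleTail_mono {F : Frame (n+1)} {k k' : ℕ} (hk : k ≤ k') {x y : F.W}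
    (h : RleTail F k x y) : RleTail F k' x y := by
  induction hk with
  | refl => exact h
  | step _ ih => exact Or.inl ih

theorem RleAll_step_right {F : Frame N} {k : ℕ} {i : Fin N} {x y z : F.W}
    (h : RleAll F k x y) (hR : F.R i y z) : RleAll F (k+1) x z := by
  induction k generalizing x with
  | zero =>
    obtain rfl : x = y := h
    exact Or.inr ⟨i, z, hR, rfl⟩
  | succ k ih =>
    rcases h with h | ⟨j, w, hR', hr⟩
    · exact Or.inl (ih h)
    · exact Or.inr ⟨j, w, hR', ih hr⟩

/-- decomposition of a path in the product into a first-coordinate path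
followed by a tail path. -/
theorem RleAll_decomp (Fs : Fin (n+1) → Frame 1) :
    ∀ (k : ℕ) (a x : (prodFrame Fs).W), RleAll (prodFrame Fs) k a x →
      RleAll (Fs 0) k (a 0) (x 0) ∧
      RleTail (prodFrame Fs) k (Function.update a 0 (x 0)) x := by
  intro k
  induction k with
  | zero =>
    intro a x h
    obtain rfl : a = x := h
    exact ⟨rfl, show Function.update a 0 (a 0) = a from Function.update_eq_self _ _⟩
  | succ k ih =>
    intro a x h
    rcases h with h | ⟨i, z, hR, hr⟩
    · obtain ⟨h1, h2⟩ := ih a x h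
      exact ⟨Or.inl h1, Or.inl h2⟩
    · obtain ⟨h1, h2⟩ := ih z x hr
      obtain ⟨hRi, heq⟩ := hR
      cases i using Fin.cases with
      | zero =>
        refine ⟨Or.inr ⟨0, z 0, hRi, h1⟩, ?_⟩
        have hupd : Function.update a 0 (x 0) = Function.update z 0 (x 0) := by
          funext j
          rcases eq_or_ne j 0 with rfl | hj
          · exact (Function.update_self (0 : Fin (n+1)) (x 0) a).trans (Function.update_self (0 : Fin (n+1)) (x 0) z).symm
          · exact (Function.update_of_ne hj _ _).trans ((heq j hj).trans (Function.update_of_ne hj _ _).symm)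
        rw [hupd]; exact Or.inl h2
      | succ j =>
        have ha0 : a 0 = z 0 := heq 0 (Fin.succ_ne_zero j).symm
        refine ⟨by rw [ha0]; exact Or.inl h1, ?_⟩
        refine Or.inr ⟨j, Function.update z 0 (x 0), ⟨?_, ?_⟩, h2⟩
        · have e1 : Function.update a 0 (x 0) j.succ = a j.succ :=
            Function.update_of_ne (Fin.succ_ne_zero j) _ _
          have e2 : Function.update z 0 (x 0) j.succ = z j.succ :=
            Function.update_of_ne (Fin.succ_ne_zero j) _ _
          rw [e1, e2]; exact hRi
        · intro l hl
          rcases eq_or_ne l 0 with rfl | hl0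
          · exact (Function.update_self (0 : Fin (n+1)) (x 0) a).trans (Function.update_self (0 : Fin (n+1)) (x 0) z).symm
          · exact (Function.update_of_ne hl0 _ _).trans ((heq l hl).trans (Function.update_of_ne hl0 _ _).symm)

/-- lifting a path in the first factor to the product. -/
theorem RleAll_lift (Fs : Fin (n+1) → Frame 1) (t : (prodFrame Fs).W) :
    ∀ (k : ℕ) (a b : (Fs 0).W), RleAll (Fs 0) k a b →
      RleAll (prodFrame Fs) k (Function.update t 0 a) (Function.update t 0 b) := by
  intro k
  induction k with
  | zero =>
    intro a b h
    obtain rfl : a = b := h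
    exact rfl
  | succ k ih =>
    intro a b h
    rcases h with h | ⟨i, c, hR, hr⟩
    · exact Or.inl (ih a b h)
    · obtain rfl : i = 0 := Subsingleton.elim i 0
      refine Or.inr ⟨0, Function.update t 0 c, ⟨by rw [show Function.update t 0 a 0 = a from Function.update_self _ _ _,
        show Function.update t 0 c 0 = c from Function.update_self _ _ _]; exact hR, ?_⟩, ih c b hr⟩
      intro l hl
      exact (Function.update_of_ne hl _ _).trans (Function.update_of_ne hl _ _).symm

/- ### Semantics of the bounded boxes -/

theorem sat_bigAnd {F : Frame (n+1)} {v : ℕ → Set F.W} {x : F.W} :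
    ∀ (l : List (MF (n+1))) (ψ : MF (n+1)),
      Sat F v x (bigAnd ψ l) ↔ (Sat F v x ψ ∧ ∀ χ ∈ l, Sat F v x χ) := by
  intro l
  induction l with
  | nil => intro ψ; simp [bigAnd]
  | cons a l ih =>
    intro ψ
    show Sat F v x (bigAnd (.and ψ a) l) ↔ _
    rw [ih]
    simp only [sat_and, List.mem_cons]
    constructor
    · rintro ⟨⟨h1, h2⟩, h3⟩
      exact ⟨h1, fun χ hχ => by rcases hχ with rfl | hχ; exact h2; exact h3 χ hχ⟩
    · rintro ⟨h1, h2⟩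
      exact ⟨⟨h1, h2 a (Or.inl rfl)⟩, fun χ hχ => h2 χ (Or.inr hχ)⟩

theorem sat_boxLe {F : Frame (n+1)} {v : ℕ → Set F.W} :
    ∀ (k : ℕ) (ψ : MF (n+1)) (x : F.W),
      Sat F v x (boxLe k ψ) ↔ ∀ y, RleAll F k x y → Sat F v y ψ := by
  intro k
  induction k with
  | zero =>
    intro ψ x
    constructor
    · intro h y hy; obtain rfl : x = y := hy; exact h
    · intro h; exact h x rfl
  | succ k ih =>
    intro ψ x
    rw [show boxLe (k+1) ψ = bigAnd (boxLe k ψ)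
          (List.ofFn fun i : Fin (n+1) => .box i (boxLe k ψ)) from rfl,
        sat_bigAnd, List.forall_mem_ofFn_iff]
    constructor
    · rintro ⟨h0, hs⟩ y (hy | ⟨i, z, hR, hz⟩)
      · exact (ih ψ x).1 h0 y hy
      · exact (ih ψ z).1 (sat_box.mp (hs i) z hR) y hz
    · intro h
      refine ⟨(ih ψ x).2 fun y hy => h y (Or.inl hy), fun i => sat_box.mpr fun z hR =>
        (ih ψ z).2 fun y hy => h y (Or.inr ⟨i, z, hR, hy⟩)⟩

theorem sat_boxLeTail {F : Frame (n+1)} {v : ℕ → Set F.W} :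
    ∀ (k : ℕ) (ψ : MF (n+1)) (x : F.W),
      Sat F v x (boxLeTail k ψ) ↔ ∀ y, RleTail F k x y → Sat F v y ψ := by
  intro k
  induction k with
  | zero =>
    intro ψ x
    constructor
    · intro h y hy; obtain rfl : x = y := hy; exact h
    · intro h; exact h x rfl
  | succ k ih =>
    intro ψ x
    rw [show boxLeTail (k+1) ψ = bigAnd (boxLeTail k ψ)
          (List.ofFn fun i : Fin n => .box i.succ (boxLeTail k ψ)) from rfl,
        sat_bigAnd, List.forall_mem_ofFn_iff]
    constructor
    · rintro ⟨h0, hs⟩ y (hy | ⟨i, z, hR, hz⟩)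
      · exact (ih ψ x).1 h0 y hy
      · exact (ih ψ z).1 (sat_box.mp (hs i) z hR) y hz
    · intro h
      refine ⟨(ih ψ x).2 fun y hy => h y (Or.inl hy), fun i => sat_box.mpr fun z hR =>
        (ih ψ z).2 fun y hy => h y (Or.inr ⟨i, z, hR, hy⟩)⟩

theorem sat_diaLeTail {F : Frame (n+1)} {v : ℕ → Set F.W} {k : ℕ} {ψ : MF (n+1)} {x : F.W} :
    Sat F v x (diaLeTail k ψ) ↔ ∃ y, RleTail F k x y ∧ Sat F v y ψ := by
  rw [show diaLeTail k ψ = MF.neg (boxLeTail k (MF.neg ψ)) from rfl, sat_neg,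
    sat_boxLeTail]
  push_neg
  simp only [sat_neg, not_not]

/- ### Subformula lemmas -/

theorem mem_subfs_self (φ : MF N) : φ ∈ φ.subfs := by
  cases φ <;> simp [MF.subfs]

theorem subfs_trans : ∀ (φ ψ θ : MF N), θ ∈ ψ.subfs → ψ ∈ φ.subfs → θ ∈ φ.subfs := by
  intro φ
  induction φ with
  | var q => intro ψ θ h1 h2; simp [MF.subfs] at h2; subst h2; exact h1
  | bot => intro ψ θ h1 h2; simp [MF.subfs] at h2; subst h2; exact h1
  | and a b iha ihb =>
    intro ψ θ h1 h2
    simp only [MF.subfs, List.mem_cons, List.mem_append] at h2 ⊢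
    rcases h2 with rfl | h2 | h2
    · simpa only [MF.subfs, List.mem_cons, List.mem_append] using h1
    · exact Or.inr (Or.inl (iha ψ θ h1 h2))
    · exact Or.inr (Or.inr (ihb ψ θ h1 h2))
  | or a b iha ihb =>
    intro ψ θ h1 h2
    simp only [MF.subfs, List.mem_cons, List.mem_append] at h2 ⊢
    rcases h2 with rfl | h2 | h2
    · simpa only [MF.subfs, List.mem_cons, List.mem_append] using h1
    · exact Or.inr (Or.inl (iha ψ θ h1 h2))
    · exact Or.inr (Or.inr (ihb ψ θ h1 h2))
  | imp a b iha ihb =>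
    intro ψ θ h1 h2
    simp only [MF.subfs, List.mem_cons, List.mem_append] at h2 ⊢
    rcases h2 with rfl | h2 | h2
    · simpa only [MF.subfs, List.mem_cons, List.mem_append] using h1
    · exact Or.inr (Or.inl (iha ψ θ h1 h2))
    · exact Or.inr (Or.inr (ihb ψ θ h1 h2))
  | box i a iha =>
    intro ψ θ h1 h2
    simp only [MF.subfs, List.mem_cons] at h2 ⊢
    rcases h2 with rfl | h2
    · simpa only [MF.subfs, List.mem_cons] using h1
    · exact Or.inr (iha ψ θ h1 h2)

theorem md_le_of_subfs : ∀ (φ θ : MF N), θ ∈ φ.subfs → θ.md ≤ φ.md := by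
  intro φ
  induction φ with
  | var q => intro θ h; simp [MF.subfs] at h; subst h; exact le_refl _
  | bot => intro θ h; simp [MF.subfs] at h; subst h; exact le_refl _
  | and a b iha ihb =>
    intro θ h
    simp only [MF.subfs, List.mem_cons, List.mem_append] at h
    rcases h with rfl | h | h
    · exact le_refl _
    · exact (iha θ h).trans (le_max_left _ _)
    · exact (ihb θ h).trans (le_max_right _ _)
  | or a b iha ihb =>
    intro θ h
    simp only [MF.subfs, List.mem_cons, List.mem_append] at h
    rcases h with rfl | h | h
    · exact le_refl _
    · exact (iha θ h).trans (le_max_left _ _)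
    · exact (ihb θ h).trans (le_max_right _ _)
  | imp a b iha ihb =>
    intro θ h
    simp only [MF.subfs, List.mem_cons, List.mem_append] at h
    rcases h with rfl | h | h
    · exact le_refl _
    · exact (iha θ h).trans (le_max_left _ _)
    · exact (ihb θ h).trans (le_max_right _ _)
  | box i a iha =>
    intro θ h
    simp only [MF.subfs, List.mem_cons] at h
    rcases h with rfl | h
    · exact le_refl _
    · exact (iha θ h).trans (Nat.le_succ _)

theorem mem_vars_of_subfs : ∀ (φ : MF N) (q : ℕ), MF.var q ∈ φ.subfs → q ∈ φ.vars := by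
  intro φ
  induction φ with
  | var r => intro q h; simp [MF.subfs] at h; simp [h, MF.vars]
  | bot => intro q h; simp [MF.subfs] at h
  | and a b iha ihb =>
    intro q h
    simp only [MF.subfs, List.mem_cons, List.mem_append] at h
    rcases h with h | h | h
    · exact absurd h (by simp)
    · exact Or.inl (iha q h)
    · exact Or.inr (ihb q h)
  | or a b iha ihb =>
    intro q h
    simp only [MF.subfs, List.mem_cons, List.mem_append] at h
    rcases h with h | h | h
    · exact absurd h (by simp)
    · exact Or.inl (iha q h)
    · exact Or.inr (ihb q h)
  | imp a b iha ihb =>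
    intro q h
    simp only [MF.subfs, List.mem_cons, List.mem_append] at h
    rcases h with h | h | h
    · exact absurd h (by simp)
    · exact Or.inl (iha q h)
    · exact Or.inr (ihb q h)
  | box i a iha =>
    intro q h
    simp only [MF.subfs, List.mem_cons] at h
    rcases h with h | h
    · exact absurd h (by simp)
    · exact iha q h

/- ### The restricted frame -/

section Restr

variable (Fs : Fin (n+1) → Frame 1) (m d : ℕ) (v : ℕ → Set (prodFrame Fs).W)
  (u : (prodFrame Fs).W) (hS : (restrSet Fs m d v u).Nonempty)

theorem restrEmb_zero (y : (restrFrame Fs m d v u hS).W) :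
    restrEmb Fs m d v u hS y 0 = (y 0).val := by
  rfl

theorem restrEmb_succ (y : (restrFrame Fs m d v u hS).W) (j : Fin n) :
    restrEmb Fs m d v u hS y j.succ = y j.succ := by
  rfl

theorem restrEmb_mk (x : (prodFrame Fs).W) (hx : x 0 ∈ restrSet Fs m d v u) :
    restrEmb Fs m d v u hS (mkRestrPt Fs m d v u hS x hx) = x := by
  funext i
  cases i using Fin.cases with
  | zero => rfl
  | succ j => rfl

theorem restr_R_iff (i : Fin (n+1)) (y z : (restrFrame Fs m d v u hS).W) :
    (restrFrame Fs m d v u hS).R i y z ↔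
      (prodFrame Fs).R i (restrEmb Fs m d v u hS y) (restrEmb Fs m d v u hS z) := by
  have hcoord : ∀ k : Fin (n+1),
      (restrEmb Fs m d v u hS y k = restrEmb Fs m d v u hS z k) ↔ (y k = z k) := by
    intro k
    cases k using Fin.cases with
    | zero =>
      rw [restrEmb_zero, restrEmb_zero]
      exact Subtype.ext_iff.symm
    | succ j =>
      rw [restrEmb_succ, restrEmb_succ]
      exact Iff.rfl
  cases i using Fin.cases with
  | zero =>
    constructor
    · rintro ⟨h1, h2⟩
      refine ⟨?_, fun k hk => (hcoord k).2 (h2 k hk)⟩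
      rw [restrEmb_zero, restrEmb_zero]
      exact h1
    · rintro ⟨h1, h2⟩
      refine ⟨?_, fun k hk => (hcoord k).1 (h2 k hk)⟩
      rw [restrEmb_zero, restrEmb_zero] at h1
      exact h1
  | succ j =>
    constructor
    · rintro ⟨h1, h2⟩
      refine ⟨?_, fun k hk => (hcoord k).2 (h2 k hk)⟩
      rw [restrEmb_succ, restrEmb_succ]
      exact h1
    · rintro ⟨h1, h2⟩
      refine ⟨?_, fun k hk => (hcoord k).1 (h2 k hk)⟩
      rw [restrEmb_succ, restrEmb_succ] at h1
      exact h1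

end Restr

/- ### The key lemma about `B` -/

theorem keyB (Fs : Fin (n+1) → Frame 1) (m : ℕ) (φ : MF (n+1))
    (v : ℕ → Set (prodFrame Fs).W) (u : (prodFrame Fs).W)
    (hA : Sat (prodFrame Fs) v u (Af m φ))
    (x : (prodFrame Fs).W) (hx : RleAll (prodFrame Fs) φ.md u x)
    (hx0 : x 0 ∈ restrSet Fs m φ.md v u) : Sat (prodFrame Fs) v x (Bf m) := by
  obtain ⟨hB, hC1, hC2⟩ :
      Sat (prodFrame Fs) v u (Bf m) ∧
      Sat (prodFrame Fs) v u (boxLe φ.md (.imp (Bf m) (boxLeTail φ.md (Bf m)))) ∧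
      Sat (prodFrame Fs) v u (boxLe φ.md (.imp (diaLeTail φ.md (Bf m)) (Bf m))) := hA
  obtain ⟨x', hx'0, hx'B, hx'r⟩ := hx0
  obtain ⟨hh', ht'⟩ := RleAll_decomp Fs φ.md u x' hx'r
  rw [hx'0] at hh' ht'
  obtain ⟨hh, ht⟩ := RleAll_decomp Fs φ.md u x hx
  have huw : RleAll (prodFrame Fs) φ.md u (Function.update u 0 (x 0)) := by
    have := RleAll_lift Fs u φ.md (u 0) (x 0) hh'
    rwa [show Function.update u 0 (u 0) = u from Function.update_eq_self _ _] at this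
  have hwdia : Sat (prodFrame Fs) v (Function.update u 0 (x 0)) (diaLeTail φ.md (Bf m)) :=
    sat_diaLeTail.mpr ⟨x', ht', hx'B⟩
  have hwB : Sat (prodFrame Fs) v (Function.update u 0 (x 0)) (Bf m) :=
    sat_imp.mp ((sat_boxLe _ _ _).mp hC2 _ huw) hwdia
  have h1 := sat_imp.mp ((sat_boxLe _ _ _).mp hC1 _ huw) hwB
  exact (sat_boxLeTail _ _ _).mp h1 x ht

end Helpers

end ModalProducts

open ModalProducts

/-- In the construction for direction (⇒) of Lemma 3.1: for every subformula `θ` of `φ`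
and every point `x̄ ∈ W̄′ ∩ R̄^{≤ md φ − md θ}(ū)`:
`𝔉′, x̄ ⊨^{v′} θ` iff `𝔉, x̄ ⊨ᵛ σ(θ)`. -/
theorem restricted_frame_simulates_subformulas (n m : ℕ) (φ : MF (n+1))
    (hvars : ∀ q ∈ φ.vars, 1 ≤ q ∧ q ≤ m)
    (Fs : Fin (n+1) → Frame 1) (hrefl : ReflexiveFrame (Fs 0))
    (v : ℕ → Set (prodFrame Fs).W)
    (u : (prodFrame Fs).W) (hA : Sat (prodFrame Fs) v u (Af m φ))
    (hS : (restrSet Fs m φ.md v u).Nonempty)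
    (v' : ℕ → Set (restrFrame Fs m φ.md v u hS).W)
    (hv' : ∀ k, 1 ≤ k → k ≤ m →
      v' k = {y | Sat (prodFrame Fs) v (restrEmb Fs m φ.md v u hS y) (betaF k)})
    (θ : MF (n+1)) (hθ : Subformula θ φ)
    (y : (restrFrame Fs m φ.md v u hS).W)
    (hy : RleAll (prodFrame Fs) (φ.md - θ.md) u (restrEmb Fs m φ.md v u hS y)) :
    Sat (restrFrame Fs m φ.md v u hS) v' y θ ↔
      Sat (prodFrame Fs) v (restrEmb Fs m φ.md v u hS y) (sigmaT m θ) := by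
  induction θ generalizing y with
  | var q =>
    obtain ⟨h1, h2⟩ := hvars q (mem_vars_of_subfs φ q hθ)
    rw [show sigmaT m (.var q) = betaF q from rfl, sat_var, hv' q h1 h2]
    exact Iff.rfl
  | bot => exact Iff.rfl
  | and a b iha ihb =>
    simp only [MF.md] at hy
    have hsa : Subformula a φ := subfs_trans φ (.and a b) a
      (by simp only [MF.subfs, List.mem_cons, List.mem_append]
          exact Or.inr (Or.inl (mem_subfs_self a))) hθ
    have hsb : Subformula b φ := subfs_trans φ (.and a b) b
      (by simp only [MF.subfs, List.mem_cons, List.mem_append]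
          exact Or.inr (Or.inr (mem_subfs_self b))) hθ
    have hya := RleAll_mono (Nat.sub_le_sub_left (le_max_left a.md b.md) φ.md) hy
    have hyb := RleAll_mono (Nat.sub_le_sub_left (le_max_right a.md b.md) φ.md) hy
    rw [show sigmaT m (.and a b) = .and (sigmaT m a) (sigmaT m b) from rfl]
    simp only [sat_and]
    rw [iha hsa y hya, ihb hsb y hyb]
  | or a b iha ihb =>
    simp only [MF.md] at hy
    have hsa : Subformula a φ := subfs_trans φ (.or a b) a
      (by simp only [MF.subfs, List.mem_cons, List.mem_append]
          exact Or.inr (Or.inl (mem_subfs_self a))) hθ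
    have hsb : Subformula b φ := subfs_trans φ (.or a b) b
      (by simp only [MF.subfs, List.mem_cons, List.mem_append]
          exact Or.inr (Or.inr (mem_subfs_self b))) hθ
    have hya := RleAll_mono (Nat.sub_le_sub_left (le_max_left a.md b.md) φ.md) hy
    have hyb := RleAll_mono (Nat.sub_le_sub_left (le_max_right a.md b.md) φ.md) hy
    rw [show sigmaT m (.or a b) = .or (sigmaT m a) (sigmaT m b) from rfl]
    simp only [sat_or]
    rw [iha hsa y hya, ihb hsb y hyb]
  | imp a b iha ihb =>
    simp only [MF.md] at hy
    have hsa : Subformula a φ := subfs_trans φ (.imp a b) a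
      (by simp only [MF.subfs, List.mem_cons, List.mem_append]
          exact Or.inr (Or.inl (mem_subfs_self a))) hθ
    have hsb : Subformula b φ := subfs_trans φ (.imp a b) b
      (by simp only [MF.subfs, List.mem_cons, List.mem_append]
          exact Or.inr (Or.inr (mem_subfs_self b))) hθ
    have hya := RleAll_mono (Nat.sub_le_sub_left (le_max_left a.md b.md) φ.md) hy
    have hyb := RleAll_mono (Nat.sub_le_sub_left (le_max_right a.md b.md) φ.md) hy
    rw [show sigmaT m (.imp a b) = .imp (sigmaT m a) (sigmaT m b) from rfl]
    simp only [sat_imp]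
    rw [iha hsa y hya, ihb hsb y hyb]
  | box i ψ ihψ =>
    simp only [MF.md] at hy
    have hsψ : Subformula ψ φ := subfs_trans φ (.box i ψ) ψ
      (by simp only [MF.subfs, List.mem_cons]
          exact Or.inr (mem_subfs_self ψ)) hθ
    have hmd : ψ.md + 1 ≤ φ.md := md_le_of_subfs φ (.box i ψ) hθ
    rw [show sigmaT m (.box i ψ) = .box i (.imp (Bf m) (sigmaT m ψ)) from rfl]
    simp only [sat_box, sat_imp]
    constructor
    · intro h z hR hBz
      have hzd : RleAll (prodFrame Fs) (φ.md - ψ.md) u z :=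
        RleAll_mono (by omega) (RleAll_step_right hy hR)
      have hz0 : z 0 ∈ restrSet Fs m φ.md v u :=
        ⟨z, rfl, hBz, RleAll_mono (Nat.sub_le _ _) hzd⟩
      have hemb := restrEmb_mk Fs m φ.md v u hS z hz0
      have hR' : (restrFrame Fs m φ.md v u hS).R i y (mkRestrPt Fs m φ.md v u hS z hz0) := by
        rw [restr_R_iff, hemb]; exact hR
      have hiff := ihψ hsψ (mkRestrPt Fs m φ.md v u hS z hz0) (by rw [hemb]; exact hzd)
      rw [hemb] at hiff
      exact hiff.1 (h _ hR')
    · intro h z' hR'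
      have hR : (prodFrame Fs).R i (restrEmb Fs m φ.md v u hS y)
          (restrEmb Fs m φ.md v u hS z') := (restr_R_iff Fs m φ.md v u hS i y z').1 hR'
      have hzd : RleAll (prodFrame Fs) (φ.md - ψ.md) u (restrEmb Fs m φ.md v u hS z') :=
        RleAll_mono (by omega) (RleAll_step_right hy hR)
      have hz0 : restrEmb Fs m φ.md v u hS z' 0 ∈ restrSet Fs m φ.md v u := by
        rw [restrEmb_zero]; exact (z' 0).2
      have hBz : Sat (prodFrame Fs) v (restrEmb Fs m φ.md v u hS z') (Bf m) :=
        keyB Fs m φ v u hA _ (RleAll_mono (Nat.sub_le _ _) hzd) hz0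
      exact (ihψ hsψ z' hzd).2 (h _ hR hBz)
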